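/- Let μ, ν be probability measures on ℝⁿ with finite second moments, γ ∈ Π(μ,ν), and γ_ℓ the block approximation of γ at scale ℓ. Then the squared 2-Wasserstein distance (on ℝⁿ×ℝⁿ) between γ and γ_ℓ satisfies W²(γ,γ_ℓ) ≤ 2nℓ², and consequently γ_ℓ → γ narrowly as ℓ → 0⁺. -/

import Mathlib

open MeasureTheory ENNReal Filter Topology
noncomputable section

abbrev En (n : ℕ) : Type := EuclideanSpace ℝ (Fin n)

def IsCoupling {n : ℕ} (μ ν : Measure (En n)) (γ : Measure (En n × En n)) : Prop :=
  γ.map Prod.fst = μ ∧ γ.map Prod.snd = ν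

def tCost {n : ℕ} (γ : Measure (En n × En n)) : ℝ≥0∞ :=
  ∫⁻ p, (‖p.1 - p.2‖₊ : ℝ≥0∞) ^ 2 ∂γ

def W2sq {n : ℕ} (μ ν : Measure (En n)) : ℝ≥0∞ :=
  ⨅ (γ : Measure (En n × En n)) (_ : IsCoupling μ ν γ), tCost γ

def M2 {n : ℕ} (μ : Measure (En n)) : ℝ≥0∞ := ∫⁻ x, (‖x‖₊ : ℝ≥0∞) ^ 2 ∂μ

def dens {X : Type*} [MeasureSpace X] (μ : Measure X) (x : X) : ℝ :=
  (μ.rnDeriv volume x).toReal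

def entIntegrand {X : Type*} [MeasureSpace X] (μ : Measure X) (x : X) : ℝ :=
  dens μ x * Real.log (dens μ x)

def Hneg {X : Type*} [MeasureSpace X] (μ : Measure X) : ℝ≥0∞ :=
  ∫⁻ x, ENNReal.ofReal (-(entIntegrand μ x))

def Hpos {X : Type*} [MeasureSpace X] (μ : Measure X) : ℝ≥0∞ :=
  ∫⁻ x, ENNReal.ofReal (entIntegrand μ x)

open scoped Classical in
def entE {X : Type*} [MeasureSpace X] (μ : Measure X) : EReal :=
  if μ ≪ (volume : Measure X) then
    (if Hpos μ = ∞ then (⊤ : EReal) else ((Hpos μ).toReal : EReal) - ((Hneg μ : ℝ≥0∞) : EReal))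
  else ⊤

def W2epsE {n : ℕ} (ε : ℝ) (μ ν : Measure (En n)) : EReal :=
  ⨅ (γ : Measure (En n × En n)) (_ : IsCoupling μ ν γ),
    ((tCost γ : ℝ≥0∞) : EReal) + (ε : EReal) * entE γ

def cube {n : ℕ} (j : Fin n → ℤ) (ℓ : ℝ) : Set (En n) :=
  {x | ∀ i, (j i : ℝ) * ℓ ≤ x i ∧ x i < ((j i : ℝ) + 1) * ℓ}

def cellNormalize {n : ℕ} (μ : Measure (En n)) (S : Set (En n)) : Measure (En n) :=
  (μ S)⁻¹ • μ.restrict S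

def blockApprox {n : ℕ} (μ ν : Measure (En n)) (γ : Measure (En n × En n)) (ℓ : ℝ) :
    Measure (En n × En n) :=
  Measure.sum (fun jk : (Fin n → ℤ) × (Fin n → ℤ) =>
    γ (cube jk.1 ℓ ×ˢ cube jk.2 ℓ) •
      ((cellNormalize μ (cube jk.1 ℓ)).prod (cellNormalize ν (cube jk.2 ℓ))))

def IsCouplingP {n : ℕ} (γ η : Measure (En n × En n))
    (π : Measure ((En n × En n) × (En n × En n))) : Prop :=
  π.map Prod.fst = γ ∧ π.map Prod.snd = η

/-- Squared Euclidean transport cost on `ℝⁿ × ℝⁿ`, i.e. `|x-x'|² + |y-y'|²`. -/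
def tCostP {n : ℕ} (π : Measure ((En n × En n) × (En n × En n))) : ℝ≥0∞ :=
  ∫⁻ q, ((‖q.1.1 - q.2.1‖₊ : ℝ≥0∞) ^ 2 + (‖q.1.2 - q.2.2‖₊ : ℝ≥0∞) ^ 2) ∂π

/-- Squared 2-Wasserstein distance on `𝒫(ℝⁿ × ℝⁿ)` for the Euclidean cost. -/
def W2sqP {n : ℕ} (γ η : Measure (En n × En n)) : ℝ≥0∞ :=
  ⨅ (π : Measure ((En n × En n) × (En n × En n))) (_ : IsCouplingP γ η π), tCostP π

noncomputable section



def ex {n : ℕ} (ℓ : ℝ) (x : En n) : Fin n → ℤ := fun i => ⌊x i / ℓ⌋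

lemma measurableSet_cube {n : ℕ} (j : Fin n → ℤ) (ℓ : ℝ) : MeasurableSet (cube j ℓ) := by
  have : cube j ℓ = ⋂ i, {x : En n | (j i : ℝ) * ℓ ≤ x i ∧ x i < ((j i : ℝ) + 1) * ℓ} := by
    ext x; simp [cube, Set.mem_iInter]
  rw [this]
  exact MeasurableSet.iInter fun i =>
    ((measurableSet_le measurable_const ((measurable_pi_apply i).comp (WithLp.measurable_ofLp 2 _))).inter
      (measurableSet_lt ((measurable_pi_apply i).comp (WithLp.measurable_ofLp 2 _)) measurable_const))

lemma mem_cube_iff {n : ℕ} {j : Fin n → ℤ} {ℓ : ℝ} (hℓ : 0 < ℓ) {x : En n} :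
    x ∈ cube j ℓ ↔ j = ex ℓ x := by
  constructor
  · intro h; funext i
    obtain ⟨h1, h2⟩ := h i
    rw [ex]; symm
    rw [Int.floor_eq_iff]
    constructor
    · rwa [le_div_iff₀ hℓ]
    · rwa [div_lt_iff₀ hℓ]
  · rintro rfl i
    constructor
    · rw [← le_div_iff₀ hℓ]; exact Int.floor_le _
    · rw [← div_lt_iff₀ hℓ]; push_cast; exact Int.lt_floor_add_one _
lemma mem_cube_ex {n : ℕ} {ℓ : ℝ} (hℓ : 0 < ℓ) (x : En n) : x ∈ cube (ex ℓ x) ℓ :=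
  (mem_cube_iff hℓ).2 rfl

lemma iUnion_cube (n : ℕ) {ℓ : ℝ} (hℓ : 0 < ℓ) : (⋃ j : Fin n → ℤ, cube j ℓ) = Set.univ := by
  ext x; simp only [Set.mem_iUnion, Set.mem_univ, iff_true]
  exact ⟨ex ℓ x, mem_cube_ex hℓ x⟩

lemma cube_disjoint {n : ℕ} {ℓ : ℝ} (hℓ : 0 < ℓ) :
    Pairwise (Function.onFun Disjoint (fun j : Fin n → ℤ => cube j ℓ)) := by
  intro j j' hne
  rw [Function.onFun, Set.disjoint_left]
  intro x hx hx'
  exact hne (((mem_cube_iff hℓ).1 hx).trans ((mem_cube_iff hℓ).1 hx').symm)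

lemma cube_normsq {n : ℕ} {j : Fin n → ℤ} {ℓ : ℝ} {x y : En n}
    (hx : x ∈ cube j ℓ) (hy : y ∈ cube j ℓ) : ‖x - y‖ ^ 2 ≤ n * ℓ ^ 2 := by
  have h : ∀ i, ‖(x - y) i‖ ^ 2 ≤ ℓ ^ 2 := by
    intro i
    obtain ⟨h1, h2⟩ := hx i; obtain ⟨h3, h4⟩ := hy i
    have : (x - y) i = x i - y i := by simp
    rw [this, Real.norm_eq_abs, sq_abs]
    nlinarith
  have hnn : (0:ℝ) ≤ ∑ i, ‖(x - y) i‖ ^ 2 := Finset.sum_nonneg fun i _ => sq_nonneg _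
  calc ‖x - y‖ ^ 2 = ∑ i, ‖(x - y) i‖ ^ 2 := by
        rw [EuclideanSpace.norm_eq, Real.sq_sqrt hnn]
    _ ≤ ∑ _i : Fin n, ℓ ^ 2 := Finset.sum_le_sum fun i _ => h i
    _ = n * ℓ ^ 2 := by simp [Finset.sum_const, mul_comm]

lemma cube_nnnormsq {n : ℕ} {j : Fin n → ℤ} {ℓ : ℝ} {x y : En n}
    (hx : x ∈ cube j ℓ) (hy : y ∈ cube j ℓ) :
    (‖x - y‖₊ : ℝ≥0∞) ^ 2 ≤ ENNReal.ofReal (n * ℓ ^ 2) := by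
  rw [← enorm_eq_nnnorm, ← ofReal_norm, ← ENNReal.ofReal_pow (norm_nonneg _)]
  exact ENNReal.ofReal_le_ofReal (cube_normsq hx hy)

lemma cube_norm_le {n : ℕ} {j : Fin n → ℤ} {ℓ : ℝ} (hℓ : 0 ≤ ℓ) {x y : En n}
    (hx : x ∈ cube j ℓ) (hy : y ∈ cube j ℓ) : ‖x - y‖ ≤ Real.sqrt n * ℓ := by
  have h := cube_normsq hx hy
  have : ‖x - y‖ ≤ Real.sqrt (n * ℓ ^ 2) := by
    rw [← Real.sqrt_sq (norm_nonneg (x - y))]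
    exact Real.sqrt_le_sqrt h
  calc ‖x - y‖ ≤ Real.sqrt (n * ℓ ^ 2) := this
    _ = Real.sqrt n * ℓ := by
        rw [Real.sqrt_mul (Nat.cast_nonneg n), Real.sqrt_sq hℓ]
noncomputable section
section B
variable {X Y : Type*} [MeasurableSpace X] [MeasurableSpace Y]

-- cellNormalize-style mass lemmas, stated abstractly
lemma norm_mass_le (μ : Measure X) (Q : Set X) : ((μ Q)⁻¹ • μ.restrict Q) Set.univ ≤ 1 := by
  rw [Measure.smul_apply, smul_eq_mul, Measure.restrict_apply_univ]
  exact ENNReal.inv_mul_le_one _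

lemma norm_compl_null (μ : Measure X) {Q : Set X} (hQ : MeasurableSet Q) :
    ((μ Q)⁻¹ • μ.restrict Q) Qᶜ = 0 := by
  rw [Measure.smul_apply, smul_eq_mul, Measure.restrict_apply hQ.compl]
  simp

instance norm_finite (μ : Measure X) (Q : Set X) [IsFiniteMeasure μ] :
    IsFiniteMeasure ((μ Q)⁻¹ • μ.restrict Q) :=
  ⟨lt_of_le_of_lt (norm_mass_le μ Q) one_lt_top⟩

lemma norm_prob (μ : Measure X) {Q : Set X} [IsFiniteMeasure μ] (h0 : μ Q ≠ 0) :
    IsProbabilityMeasure ((μ Q)⁻¹ • μ.restrict Q) := by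
  constructor
  rw [Measure.smul_apply, smul_eq_mul, Measure.restrict_apply_univ]
  exact ENNReal.inv_mul_cancel h0 (measure_ne_top μ Q)

lemma prod_compl_null {A : Measure X} {B : Measure Y} [SFinite A] [SFinite B]
    {S : Set X} {T : Set Y} (hS : A Sᶜ = 0) (hT : B Tᶜ = 0) :
    (A.prod B) ((S ×ˢ T)ᶜ) = 0 := by
  have hsub : (S ×ˢ T)ᶜ ⊆ (Sᶜ ×ˢ (Set.univ : Set Y)) ∪ ((Set.univ : Set X) ×ˢ Tᶜ) := by
    intro p hp
    rw [Set.mem_compl_iff, Set.mem_prod] at hp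
    push_neg at hp
    by_cases h1 : p.1 ∈ S
    · exact Or.inr ⟨Set.mem_univ _, hp h1⟩
    · exact Or.inl ⟨h1, Set.mem_univ _⟩
  refine le_antisymm ?_ zero_le
  calc (A.prod B) ((S ×ˢ T)ᶜ) ≤ (A.prod B) (Sᶜ ×ˢ Set.univ) + (A.prod B) (Set.univ ×ˢ Tᶜ) :=
        le_trans (measure_mono hsub) (measure_union_le _ _)
    _ = 0 := by rw [Measure.prod_prod, Measure.prod_prod, hS, hT]; simp

end B

section Coupling
variable {n : ℕ}

def Scell (ℓ : ℝ) (jk : (Fin n → ℤ) × (Fin n → ℤ)) : Set (En n × En n) :=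
  cube jk.1 ℓ ×ˢ cube jk.2 ℓ

def mcell (μ ν : Measure (En n)) (ℓ : ℝ) (jk : (Fin n → ℤ) × (Fin n → ℤ)) :
    Measure (En n × En n) :=
  (cellNormalize μ (cube jk.1 ℓ)).prod (cellNormalize ν (cube jk.2 ℓ))

instance cellNormalize_finite (μ : Measure (En n)) (Q : Set (En n)) [IsFiniteMeasure μ] :
    IsFiniteMeasure (cellNormalize μ Q) := norm_finite μ Q

instance mcell_finite (μ ν : Measure (En n)) [IsFiniteMeasure μ] [IsFiniteMeasure ν]
    (ℓ : ℝ) (jk : (Fin n → ℤ) × (Fin n → ℤ)) : IsFiniteMeasure (mcell μ ν ℓ jk) := by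
  unfold mcell; infer_instance

def picpl (μ ν : Measure (En n)) (γ : Measure (En n × En n)) (ℓ : ℝ) :
    Measure ((En n × En n) × (En n × En n)) :=
  Measure.sum fun jk => (γ.restrict (Scell ℓ jk)).prod (mcell μ ν ℓ jk)

lemma measurableSet_Scell (ℓ : ℝ) (jk : (Fin n → ℤ) × (Fin n → ℤ)) :
    MeasurableSet (Scell (n := n) ℓ jk) :=
  (measurableSet_cube _ _).prod (measurableSet_cube _ _)

lemma Scell_disjoint {ℓ : ℝ} (hℓ : 0 < ℓ) :
    Pairwise (Function.onFun Disjoint (fun jk : (Fin n → ℤ) × (Fin n → ℤ) => Scell (n := n) ℓ jk)) := by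
  intro jk jk' hne
  rw [Function.onFun, Set.disjoint_left]
  rintro ⟨x, y⟩ ⟨hx, hy⟩ ⟨hx', hy'⟩
  exact hne (Prod.ext (((mem_cube_iff hℓ).1 hx).trans ((mem_cube_iff hℓ).1 hx').symm)
    (((mem_cube_iff hℓ).1 hy).trans ((mem_cube_iff hℓ).1 hy').symm))

lemma iUnion_Scell {ℓ : ℝ} (hℓ : 0 < ℓ) :
    (⋃ jk : (Fin n → ℤ) × (Fin n → ℤ), Scell (n := n) ℓ jk) = Set.univ := by
  ext p
  simp only [Set.mem_iUnion, Set.mem_univ, iff_true]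
  exact ⟨(ex ℓ p.1, ex ℓ p.2), mem_cube_ex hℓ p.1, mem_cube_ex hℓ p.2⟩

lemma gamma_decomp {ℓ : ℝ} (hℓ : 0 < ℓ) (γ : Measure (En n × En n)) :
    γ = Measure.sum fun jk : (Fin n → ℤ) × (Fin n → ℤ) => γ.restrict (Scell ℓ jk) := by
  conv_lhs => rw [← Measure.restrict_univ (μ := γ), ← iUnion_Scell hℓ]
  exact Measure.restrict_iUnion (Scell_disjoint hℓ) (fun jk => measurableSet_Scell ℓ jk)

lemma tsum_gamma_Scell {ℓ : ℝ} (hℓ : 0 < ℓ) (γ : Measure (En n × En n)) :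
    (∑' jk : (Fin n → ℤ) × (Fin n → ℤ), γ (Scell ℓ jk)) = γ Set.univ := by
  rw [← iUnion_Scell hℓ (n := n)]
  exact (measure_iUnion (Scell_disjoint hℓ) (fun jk => measurableSet_Scell ℓ jk)).symm

variable (μ ν : Measure (En n)) [IsProbabilityMeasure μ] [IsProbabilityMeasure ν]
  (γ : Measure (En n × En n)) (hγ : IsCoupling μ ν γ)

lemma gamma_prod_univ (hγ : IsCoupling μ ν γ) (j : Fin n → ℤ) (ℓ : ℝ) :
    γ (cube j ℓ ×ˢ (Set.univ : Set (En n))) = μ (cube j ℓ) := by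
  rw [← hγ.1, Measure.map_apply measurable_fst (measurableSet_cube j ℓ), ← Set.prod_univ]

lemma gamma_univ_prod (hγ : IsCoupling μ ν γ) (k : Fin n → ℤ) (ℓ : ℝ) :
    γ ((Set.univ : Set (En n)) ×ˢ cube k ℓ) = ν (cube k ℓ) := by
  rw [← hγ.2, Measure.map_apply measurable_snd (measurableSet_cube k ℓ), ← Set.univ_prod]

lemma mcell_prob (hγ : IsCoupling μ ν γ) {ℓ : ℝ} {jk : (Fin n → ℤ) × (Fin n → ℤ)}
    (h0 : γ (Scell ℓ jk) ≠ 0) : IsProbabilityMeasure (mcell μ ν ℓ jk) := by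
  have hμ0 : μ (cube jk.1 ℓ) ≠ 0 := by
    intro h
    exact h0 (le_antisymm (le_trans (measure_mono (by exact Set.prod_mono_right (Set.subset_univ _)))
      ((gamma_prod_univ μ ν γ hγ jk.1 ℓ).le.trans h.le)) zero_le)
  have hν0 : ν (cube jk.2 ℓ) ≠ 0 := by
    intro h
    exact h0 (le_antisymm (le_trans (measure_mono (by exact Set.prod_mono_left (Set.subset_univ _)))
      ((gamma_univ_prod μ ν γ hγ jk.2 ℓ).le.trans h.le)) zero_le)
  have h1 : IsProbabilityMeasure (cellNormalize μ (cube jk.1 ℓ)) := norm_prob μ hμ0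
  have h2 : IsProbabilityMeasure (cellNormalize ν (cube jk.2 ℓ)) := norm_prob ν hν0
  unfold mcell; infer_instance

lemma picpl_fst {ℓ : ℝ} (hℓ : 0 < ℓ) (hγ : IsCoupling μ ν γ) :
    (picpl μ ν γ ℓ).map Prod.fst = γ := by
  rw [picpl, Measure.map_sum measurable_fst.aemeasurable]
  have : ∀ jk : (Fin n → ℤ) × (Fin n → ℤ),
      ((γ.restrict (Scell ℓ jk)).prod (mcell μ ν ℓ jk)).map Prod.fst = γ.restrict (Scell ℓ jk) := by
    intro jk
    rw [Measure.map_fst_prod]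
    by_cases h0 : γ (Scell ℓ jk) = 0
    · rw [Measure.restrict_eq_zero.2 h0, smul_zero]
    · haveI := mcell_prob μ ν γ hγ h0
      rw [measure_univ, one_smul]
  simp_rw [this]
  exact (gamma_decomp hℓ γ).symm

lemma picpl_snd {ℓ : ℝ} (hγ : IsCoupling μ ν γ) :
    (picpl μ ν γ ℓ).map Prod.snd = blockApprox μ ν γ ℓ := by
  rw [picpl, Measure.map_sum measurable_snd.aemeasurable, blockApprox]
  congr 1
  funext jk
  rw [Measure.map_snd_prod, Measure.restrict_apply_univ]
  rfl

lemma mcell_mass_le : (mcell μ ν ℓ jk) Set.univ ≤ 1 := by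
  rw [mcell, ← Set.univ_prod_univ, Measure.prod_prod]
  calc (cellNormalize μ (cube jk.1 ℓ)) Set.univ * (cellNormalize ν (cube jk.2 ℓ)) Set.univ
      ≤ 1 * 1 := mul_le_mul' (norm_mass_le μ _) (norm_mass_le ν _)
    _ = 1 := one_mul 1

end Coupling
section Cost
variable {n : ℕ} (μ ν : Measure (En n)) [IsProbabilityMeasure μ] [IsProbabilityMeasure ν]
  (γ : Measure (En n × En n))

lemma coupling_prob {μ ν : Measure (En n)} [IsProbabilityMeasure μ]
    {γ : Measure (En n × En n)} (hγ : IsCoupling μ ν γ) : IsProbabilityMeasure γ := by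
  constructor
  have : (γ.map Prod.fst) Set.univ = 1 := by rw [hγ.1, measure_univ]
  rwa [Measure.map_apply measurable_fst MeasurableSet.univ, Set.preimage_univ] at this

lemma mcell_compl_null (ℓ : ℝ) (jk : (Fin n → ℤ) × (Fin n → ℤ)) :
    (mcell μ ν ℓ jk) ((Scell ℓ jk)ᶜ) = 0 := by
  rw [mcell, Scell]
  exact prod_compl_null (norm_compl_null μ (measurableSet_cube _ _))
    (norm_compl_null ν (measurableSet_cube _ _))

lemma picpl_term_ae [SFinite γ] (ℓ : ℝ) (jk : (Fin n → ℤ) × (Fin n → ℤ)) :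
    ∀ᵐ q ∂((γ.restrict (Scell ℓ jk)).prod (mcell μ ν ℓ jk)),
      q ∈ (Scell ℓ jk) ×ˢ (Scell ℓ jk) := by
  have h1 : (γ.restrict (Scell ℓ jk)) ((Scell ℓ jk)ᶜ) = 0 := by
    rw [Measure.restrict_apply (measurableSet_Scell ℓ jk).compl]
    simp
  have h2 := mcell_compl_null μ ν ℓ jk
  have := prod_compl_null (A := γ.restrict (Scell ℓ jk)) (B := mcell μ ν ℓ jk) h1 h2
  rw [ae_iff]
  exact this

lemma cost_bound (hγ : IsCoupling μ ν γ) {ℓ : ℝ} (hℓ : 0 < ℓ) :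
    tCostP (picpl μ ν γ ℓ) ≤ ENNReal.ofReal (2 * n * ℓ ^ 2) := by
  haveI : IsProbabilityMeasure γ := coupling_prob hγ
  have hconst : ENNReal.ofReal ((n : ℝ) * ℓ ^ 2) + ENNReal.ofReal ((n : ℝ) * ℓ ^ 2)
      = ENNReal.ofReal (2 * n * ℓ ^ 2) := by
    rw [← ENNReal.ofReal_add (by positivity) (by positivity)]
    ring_nf
  rw [tCostP, picpl, lintegral_sum_measure]
  have hterm : ∀ jk : (Fin n → ℤ) × (Fin n → ℤ),
      (∫⁻ q, ((‖q.1.1 - q.2.1‖₊ : ℝ≥0∞) ^ 2 + (‖q.1.2 - q.2.2‖₊ : ℝ≥0∞) ^ 2)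
        ∂((γ.restrict (Scell ℓ jk)).prod (mcell μ ν ℓ jk)))
      ≤ ENNReal.ofReal (2 * n * ℓ ^ 2) * γ (Scell ℓ jk) := by
    intro jk
    have hae := picpl_term_ae μ ν γ ℓ jk
    have hb : ∀ᵐ q ∂((γ.restrict (Scell ℓ jk)).prod (mcell μ ν ℓ jk)),
        ((‖q.1.1 - q.2.1‖₊ : ℝ≥0∞) ^ 2 + (‖q.1.2 - q.2.2‖₊ : ℝ≥0∞) ^ 2)
          ≤ ENNReal.ofReal (2 * n * ℓ ^ 2) := by
      filter_upwards [hae] with q hq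
      obtain ⟨⟨ha1, ha2⟩, hb1, hb2⟩ := hq
      rw [← hconst]
      exact add_le_add (cube_nnnormsq ha1 hb1) (cube_nnnormsq ha2 hb2)
    calc (∫⁻ q, ((‖q.1.1 - q.2.1‖₊ : ℝ≥0∞) ^ 2 + (‖q.1.2 - q.2.2‖₊ : ℝ≥0∞) ^ 2)
          ∂((γ.restrict (Scell ℓ jk)).prod (mcell μ ν ℓ jk)))
        ≤ ∫⁻ _, ENNReal.ofReal (2 * n * ℓ ^ 2)
            ∂((γ.restrict (Scell ℓ jk)).prod (mcell μ ν ℓ jk)) := lintegral_mono_ae hb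
      _ = ENNReal.ofReal (2 * n * ℓ ^ 2) *
            ((γ.restrict (Scell ℓ jk)).prod (mcell μ ν ℓ jk)) Set.univ := lintegral_const _
      _ ≤ ENNReal.ofReal (2 * n * ℓ ^ 2) * γ (Scell ℓ jk) := by
          gcongr
          rw [← Set.univ_prod_univ, Measure.prod_prod, Measure.restrict_apply_univ]
          calc γ (Scell ℓ jk) * (mcell μ ν ℓ jk) Set.univ
              ≤ γ (Scell ℓ jk) * 1 := mul_le_mul' le_rfl (mcell_mass_le μ ν)
            _ = γ (Scell ℓ jk) := mul_one _
  calc (∑' jk : (Fin n → ℤ) × (Fin n → ℤ),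
        ∫⁻ q, ((‖q.1.1 - q.2.1‖₊ : ℝ≥0∞) ^ 2 + (‖q.1.2 - q.2.2‖₊ : ℝ≥0∞) ^ 2)
          ∂((γ.restrict (Scell ℓ jk)).prod (mcell μ ν ℓ jk)))
      ≤ ∑' jk : (Fin n → ℤ) × (Fin n → ℤ), ENNReal.ofReal (2 * n * ℓ ^ 2) * γ (Scell ℓ jk) :=
        ENNReal.tsum_le_tsum hterm
    _ = ENNReal.ofReal (2 * n * ℓ ^ 2) * ∑' jk : (Fin n → ℤ) × (Fin n → ℤ), γ (Scell ℓ jk) :=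
        ENNReal.tsum_mul_left
    _ ≤ ENNReal.ofReal (2 * n * ℓ ^ 2) := by
        rw [tsum_gamma_Scell hℓ γ, measure_univ, mul_one]

lemma part1 (hγ : IsCoupling μ ν γ) {ℓ : ℝ} (hℓ : 0 < ℓ) :
    W2sqP γ (blockApprox μ ν γ ℓ) ≤ ENNReal.ofReal (2 * n * ℓ ^ 2) := by
  refine le_trans ?_ (cost_bound μ ν γ hγ hℓ)
  exact iInf₂_le (picpl μ ν γ ℓ) ⟨picpl_fst μ ν γ hℓ hγ, picpl_snd μ ν γ hγ⟩

end Cost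
section Part2
variable {n : ℕ}

lemma measurable_ex (ℓ : ℝ) : Measurable (ex (n := n) ℓ) :=
  measurable_pi_lambda _ fun i => Int.measurable_floor.comp (Measurable.div_const ((measurable_pi_apply (X := fun _ : Fin n => ℝ) i).comp (WithLp.measurable_ofLp 2 _)) ℓ)

def Gfun (μ ν : Measure (En n)) (ℓ : ℝ) (f : En n × En n → ℝ) : En n × En n → ℝ :=
  fun p => ∫ q, f q ∂(mcell μ ν ℓ (ex ℓ p.1, ex ℓ p.2))

lemma measurable_Gfun (μ ν : Measure (En n)) (ℓ : ℝ) (f : En n × En n → ℝ) :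
    Measurable (Gfun μ ν ℓ f) := by
  have h1 : Measurable fun p : En n × En n => (ex ℓ p.1, ex ℓ p.2) :=
    ((measurable_ex ℓ).comp measurable_fst).prodMk ((measurable_ex ℓ).comp measurable_snd)
  exact (measurable_of_countable (fun jk => ∫ q, f q ∂(mcell μ ν ℓ jk))).comp h1

variable (μ ν : Measure (En n)) [IsProbabilityMeasure μ] [IsProbabilityMeasure ν]
  (γ : Measure (En n × En n))

lemma bcf_integrable {η : Measure (En n × En n)} [IsFiniteMeasure η]
    (f : BoundedContinuousFunction (En n × En n) ℝ) : Integrable (⇑f) η :=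
  ⟨f.continuous.measurable.aestronglyMeasurable,
    HasFiniteIntegral.of_bounded (C := ‖f‖) (ae_of_all _ fun x => f.norm_coe_le_norm x)⟩

lemma Gfun_bound (ℓ : ℝ) (f : BoundedContinuousFunction (En n × En n) ℝ) (p : En n × En n) :
    ‖Gfun μ ν ℓ (⇑f) p‖ ≤ ‖f‖ := by
  rw [Gfun]
  set m := mcell μ ν ℓ (ex ℓ p.1, ex ℓ p.2)
  have h1 : ‖∫ q, f q ∂m‖ ≤ ‖f‖ * (m Set.univ).toReal :=
    norm_integral_le_of_norm_le_const (ae_of_all _ fun x => f.norm_coe_le_norm x)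
  have h2 : (m Set.univ).toReal ≤ 1 := by
    have := mcell_mass_le (μ := μ) (ν := ν) (ℓ := ℓ) (jk := (ex ℓ p.1, ex ℓ p.2))
    simpa using ENNReal.toReal_mono one_ne_top this
  calc ‖Gfun μ ν ℓ (⇑f) p‖ ≤ ‖f‖ * (m Set.univ).toReal := h1
    _ ≤ ‖f‖ * 1 := mul_le_mul_of_nonneg_left h2 (norm_nonneg f)
    _ = ‖f‖ := mul_one _

lemma blockApprox_finite {ℓ : ℝ} (hℓ : 0 < ℓ) [IsProbabilityMeasure γ] :
    IsFiniteMeasure (blockApprox μ ν γ ℓ) := by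
  constructor
  rw [blockApprox, Measure.sum_apply _ MeasurableSet.univ]
  have hle : (∑' jk : (Fin n → ℤ) × (Fin n → ℤ),
      (γ (cube jk.1 ℓ ×ˢ cube jk.2 ℓ) •
        ((cellNormalize μ (cube jk.1 ℓ)).prod (cellNormalize ν (cube jk.2 ℓ)))) Set.univ)
      ≤ ∑' jk : (Fin n → ℤ) × (Fin n → ℤ), γ (Scell ℓ jk) := by
    refine ENNReal.tsum_le_tsum fun jk => ?_
    rw [Measure.smul_apply, smul_eq_mul]
    calc γ (cube jk.1 ℓ ×ˢ cube jk.2 ℓ) * (mcell μ ν ℓ jk) Set.univ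
        ≤ γ (Scell ℓ jk) * 1 := mul_le_mul' le_rfl (mcell_mass_le μ ν)
      _ = γ (Scell ℓ jk) := mul_one _
  refine lt_of_le_of_lt (hle.trans ?_) one_lt_top
  rw [tsum_gamma_Scell hℓ γ, measure_univ]

lemma integral_blockApprox_eq {ℓ : ℝ} (hℓ : 0 < ℓ) [IsProbabilityMeasure γ]
    (f : BoundedContinuousFunction (En n × En n) ℝ) :
    ∫ p, f p ∂(blockApprox μ ν γ ℓ) = ∫ p, Gfun μ ν ℓ (⇑f) p ∂γ := by
  haveI := blockApprox_finite μ ν γ hℓ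
  have hint : Integrable (⇑f) (blockApprox μ ν γ ℓ) := bcf_integrable f
  have hG_int : Integrable (Gfun μ ν ℓ (⇑f)) γ :=
    ⟨(measurable_Gfun μ ν ℓ (⇑f)).aestronglyMeasurable,
      HasFiniteIntegral.of_bounded (C := ‖f‖) (ae_of_all _ fun p => Gfun_bound μ ν ℓ f p)⟩
  have hL : ∫ p, f p ∂(blockApprox μ ν γ ℓ)
      = ∑' jk : (Fin n → ℤ) × (Fin n → ℤ),
          (γ (Scell ℓ jk)).toReal • ∫ q, f q ∂(mcell μ ν ℓ jk) := by
    rw [blockApprox] at hint ⊢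
    rw [integral_sum_measure hint]
    congr 1
    funext jk
    exact integral_smul_measure _ _
  have hR : ∫ p, Gfun μ ν ℓ (⇑f) p ∂γ
      = ∑' jk : (Fin n → ℤ) × (Fin n → ℤ),
          (γ (Scell ℓ jk)).toReal • ∫ q, f q ∂(mcell μ ν ℓ jk) := by
    have hG_int' : Integrable (Gfun μ ν ℓ (⇑f))
        (Measure.sum fun jk : (Fin n → ℤ) × (Fin n → ℤ) => γ.restrict (Scell ℓ jk)) := by
      rw [← gamma_decomp hℓ γ]; exact hG_int
    conv_lhs => rw [gamma_decomp hℓ γ]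
    rw [integral_sum_measure hG_int']
    congr 1
    funext jk
    have hae : ∀ᵐ p ∂(γ.restrict (Scell ℓ jk)),
        Gfun μ ν ℓ (⇑f) p = ∫ q, f q ∂(mcell μ ν ℓ jk) := by
      filter_upwards [ae_restrict_mem (measurableSet_Scell ℓ jk)] with p hp
      obtain ⟨h1, h2⟩ := hp
      rw [Gfun, ← (mem_cube_iff hℓ).1 h1, ← (mem_cube_iff hℓ).1 h2]
    rw [integral_congr_ae hae, integral_const, measureReal_def, Measure.restrict_apply_univ]
  rw [hL, hR]

lemma good_ae {μ ν : Measure (En n)} [IsProbabilityMeasure μ] [IsProbabilityMeasure ν]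
    {γ : Measure (En n × En n)} (hγ : IsCoupling μ ν γ) {ℓ : ℝ} (hℓ : 0 < ℓ) :
    ∀ᵐ p ∂γ, μ (cube (ex ℓ p.1) ℓ) ≠ 0 ∧ ν (cube (ex ℓ p.2) ℓ) ≠ 0 := by
  have h1 : ∀ᵐ p ∂γ, μ (cube (ex ℓ p.1) ℓ) ≠ 0 := by
    rw [ae_iff]
    have hB : γ (⋃ j : {j : Fin n → ℤ // μ (cube j ℓ) = 0},
        (cube (j : Fin n → ℤ) ℓ ×ˢ (Set.univ : Set (En n)))) = 0 :=
      measure_iUnion_null fun j => by rw [gamma_prod_univ μ ν γ hγ]; exact j.2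
    refine measure_mono_null (fun p hp => ?_) hB
    simp only [Set.mem_setOf_eq, not_not] at hp
    exact Set.mem_iUnion.2 ⟨⟨ex ℓ p.1, hp⟩, mem_cube_ex hℓ p.1, Set.mem_univ _⟩
  have h2 : ∀ᵐ p ∂γ, ν (cube (ex ℓ p.2) ℓ) ≠ 0 := by
    rw [ae_iff]
    have hB : γ (⋃ k : {k : Fin n → ℤ // ν (cube k ℓ) = 0},
        ((Set.univ : Set (En n)) ×ˢ cube (k : Fin n → ℤ) ℓ)) = 0 :=
      measure_iUnion_null fun k => by rw [gamma_univ_prod μ ν γ hγ]; exact k.2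
    refine measure_mono_null (fun p hp => ?_) hB
    simp only [Set.mem_setOf_eq, not_not] at hp
    exact Set.mem_iUnion.2 ⟨⟨ex ℓ p.2, hp⟩, Set.mem_univ _, mem_cube_ex hℓ p.2⟩
  exact h1.and h2

end Part2
section Final
variable {n : ℕ} (μ ν : Measure (En n)) [IsProbabilityMeasure μ] [IsProbabilityMeasure ν]

lemma Gfun_tendsto (f : BoundedContinuousFunction (En n × En n) ℝ) (p : En n × En n)
    (v : ℕ → ℝ) (hv0 : ∀ m, 0 < v m) (hv : Tendsto v atTop (𝓝 0))
    (hgood : ∀ m, μ (cube (ex (v m) p.1) (v m)) ≠ 0 ∧ ν (cube (ex (v m) p.2) (v m)) ≠ 0) :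
    Tendsto (fun m => Gfun μ ν (v m) (⇑f) p) atTop (𝓝 (f p)) := by
  rw [Metric.tendsto_atTop]
  intro ε hε
  obtain ⟨δ, hδ, hnear⟩ := Metric.continuousAt_iff.1 f.continuous.continuousAt (ε/2) (by positivity)
  set c : ℝ := Real.sqrt n + 1 with hc_def
  have hc0 : 0 < c := by positivity
  have hev : ∀ᶠ m in atTop, v m < δ / c := (tendsto_order.1 hv).2 (δ / c) (by positivity)
  obtain ⟨N, hN⟩ := eventually_atTop.1 hev
  refine ⟨N, fun m hm => ?_⟩
  set ℓ := v m with hℓ_def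
  have hℓ : 0 < ℓ := hv0 m
  set jk : (Fin n → ℤ) × (Fin n → ℤ) := (ex ℓ p.1, ex ℓ p.2) with hjk_def
  set mc := mcell μ ν ℓ jk with hmc_def
  have h1 : IsProbabilityMeasure (cellNormalize μ (cube jk.1 ℓ)) := norm_prob μ (hgood m).1
  have h2 : IsProbabilityMeasure (cellNormalize ν (cube jk.2 ℓ)) := norm_prob ν (hgood m).2
  haveI : IsProbabilityMeasure mc := by rw [hmc_def, mcell]; infer_instance
  have hae : ∀ᵐ q ∂mc, q ∈ Scell ℓ jk := by
    rw [ae_iff]; exact mcell_compl_null μ ν ℓ jk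
  have hfint : Integrable (⇑f) mc := bcf_integrable f
  have heq : Gfun μ ν ℓ (⇑f) p - f p = ∫ q, (f q - f p) ∂mc := by
    rw [integral_sub hfint (integrable_const _), integral_const, measureReal_def, measure_univ]
    simp [Gfun]
    rfl
  have hbound : ∀ᵐ q ∂mc, ‖f q - f p‖ ≤ ε / 2 := by
    filter_upwards [hae] with q hq
    have hq1 : dist q.1 p.1 ≤ Real.sqrt n * ℓ := by
      rw [dist_eq_norm]
      exact cube_norm_le hℓ.le hq.1 (mem_cube_ex hℓ p.1)
    have hq2 : dist q.2 p.2 ≤ Real.sqrt n * ℓ := by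
      rw [dist_eq_norm]
      exact cube_norm_le hℓ.le hq.2 (mem_cube_ex hℓ p.2)
    have hlt : Real.sqrt n * ℓ < δ := by
      have h3 : ℓ < δ / c := hN m hm
      have h4 : ℓ * c < δ := (lt_div_iff₀ hc0).1 h3
      nlinarith [Real.sqrt_nonneg (n : ℝ)]
    have hdist : dist q p < δ := by
      rw [Prod.dist_eq]
      exact lt_of_le_of_lt (max_le hq1 hq2) hlt
    rw [← dist_eq_norm]
    exact (hnear hdist).le
  have hnorm : ‖∫ q, (f q - f p) ∂mc‖ ≤ (ε / 2) * (mc Set.univ).toReal :=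
    norm_integral_le_of_norm_le_const hbound
  rw [measure_univ] at hnorm
  simp only [ENNReal.toReal_one, mul_one] at hnorm
  rw [Real.dist_eq]
  have habs : |Gfun μ ν ℓ (⇑f) p - f p| ≤ ε / 2 := by
    rw [← Real.norm_eq_abs, heq]; exact hnorm
  linarith

end Final
/-- `W²(γ,γ_ℓ) ≤ 2 n ℓ²` for the block approximation, and consequently
`γ_ℓ → γ` narrowly as `ℓ → 0⁺`. -/
theorem stmt_8 {n : ℕ} (μ ν : Measure (En n))
    [IsProbabilityMeasure μ] [IsProbabilityMeasure ν]
    (hμM : M2 μ ≠ ∞) (hνM : M2 ν ≠ ∞)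
    (γ : Measure (En n × En n)) (hγ : IsCoupling μ ν γ) :
    (∀ ℓ : ℝ, 0 < ℓ →
        W2sqP γ (blockApprox μ ν γ ℓ) ≤ ENNReal.ofReal (2 * n * ℓ ^ 2)) ∧
      ∀ f : BoundedContinuousFunction (En n × En n) ℝ,
        Tendsto (fun ℓ : ℝ => ∫ p, f p ∂(blockApprox μ ν γ ℓ)) (𝓝[>] (0:ℝ))
          (𝓝 (∫ p, f p ∂γ)) := by
  haveI : IsProbabilityMeasure γ := coupling_prob hγ
  constructor
  · intro ℓ hℓ
    exact part1 μ ν γ hγ hℓ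
  · intro f
    rw [tendsto_iff_seq_tendsto]
    intro u hu
    have hu0 : ∀ᶠ m in atTop, u m ∈ Set.Ioi (0:ℝ) := hu eventually_mem_nhdsWithin
    set v : ℕ → ℝ := fun m => if 0 < u m then u m else 1 with hv_def
    have hv0 : ∀ m, 0 < v m := fun m => by
      by_cases h : 0 < u m <;> simp [hv_def, h]
    have huv : ∀ᶠ m in atTop, u m = v m := by
      filter_upwards [hu0] with m hm
      simp [hv_def, Set.mem_Ioi.1 hm]
    have hu' : Tendsto u atTop (𝓝 0) := hu.mono_right nhdsWithin_le_nhds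
    have hv : Tendsto v atTop (𝓝 0) := hu'.congr' huv
    have key : Tendsto (fun m => ∫ p, f p ∂(blockApprox μ ν γ (v m))) atTop
        (𝓝 (∫ p, f p ∂γ)) := by
      have heq : ∀ m, ∫ p, f p ∂(blockApprox μ ν γ (v m)) = ∫ p, Gfun μ ν (v m) (⇑f) p ∂γ :=
        fun m => integral_blockApprox_eq μ ν γ (hv0 m) f
      simp_rw [heq]
      refine tendsto_integral_of_dominated_convergence (fun _ => ‖f‖)
        (fun m => (measurable_Gfun μ ν (v m) (⇑f)).aestronglyMeasurable)
        (integrable_const _)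
        (fun m => ae_of_all _ fun p => Gfun_bound μ ν (v m) f p) ?_
      have hgood : ∀ᵐ p ∂γ, ∀ m,
          μ (cube (ex (v m) p.1) (v m)) ≠ 0 ∧ ν (cube (ex (v m) p.2) (v m)) ≠ 0 :=
        ae_all_iff.2 fun m => good_ae hγ (hv0 m)
      filter_upwards [hgood] with p hp
      exact Gfun_tendsto μ ν f p v hv0 hv hp
    refine Tendsto.congr' ?_ key
    filter_upwards [huv] with m hm
    rw [Function.comp_apply, hm]
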